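/- Let $(\Omega, \mu)$ be a standard probability space, $L:\Omega\to\Omega$ an ergodic measure-preserving transformation, $f:\Omega\to\mathbf{R}$ measurable, and $S_n = \sum_{k=0}^{n-1} f\circ L^k$. Let $D:\mathbf{R}_+\to\mathbf{R}_+$ be a concave function with $\lim_{t\to\infty} D(t)/t = 0$. If $D(|f|)$ is integrable, then $\lim_{n\to\infty} \frac{1}{n} D(|S_n|) = 0$ almost surely. -/

import Mathlib

open MeasureTheory Filter Topology Set

private lemma concave_mono {D : ℝ → ℝ} (hD : ConcaveOn ℝ (Ici 0) D)
    (hDnonneg : ∀ t ∈ Ici (0:ℝ), 0 ≤ D t) : MonotoneOn D (Ici 0) := by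
  intro a ha b hb hab
  rcases eq_or_lt_of_le hab with rfl | hab
  · exact le_refl _
  by_contra hlt
  push_neg at hlt
  have ha' : (0:ℝ) ≤ a := ha
  have hc0 : 0 < D a - D b := sub_pos.2 hlt
  set t := max b (a + (b - a) * (D a + 1) / (D a - D b)) with ht
  have htb : b ≤ t := le_max_left _ _
  have hta : a < t := lt_of_lt_of_le hab htb
  have ht0 : (0:ℝ) ≤ t := le_trans (le_trans ha' hab.le) htb
  have hta' : 0 < t - a := sub_pos.2 hta
  have hba : 0 < b - a := sub_pos.2 hab
  have hμa : (0:ℝ) ≤ (t - b) / (t - a) := div_nonneg (sub_nonneg.2 htb) hta'.le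
  have hμb : (0:ℝ) ≤ (b - a) / (t - a) := div_nonneg hba.le hta'.le
  have hsum : (t - b) / (t - a) + (b - a) / (t - a) = 1 := by
    field_simp <;> ring
  have hcomb : (t - b) / (t - a) * a + (b - a) / (t - a) * t = b := by
    field_simp; ring
  have key := hD.2 ha (mem_Ici.2 ht0) hμa hμb hsum
  rw [smul_eq_mul, smul_eq_mul, smul_eq_mul, smul_eq_mul, hcomb] at key
  have key' : (t - b) * D a + (b - a) * D t ≤ D b * (t - a) := by
    rw [div_mul_eq_mul_div, div_mul_eq_mul_div, ← add_div,
      div_le_iff₀ hta'] at key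
    linarith
  have hDt' : (D a - D b) * (t - a) ≤ (D a - D t) * (b - a) := by nlinarith [key']
  have htbig : a + (b - a) * (D a + 1) / (D a - D b) ≤ t := le_max_right _ _
  have h2' : (b - a) * (D a + 1) / (D a - D b) ≤ t - a := by linarith
  have h2 : (b - a) * (D a + 1) ≤ (t - a) * (D a - D b) := by
    calc (b - a) * (D a + 1)
        = ((b - a) * (D a + 1) / (D a - D b)) * (D a - D b) := by field_simp
      _ ≤ (t - a) * (D a - D b) := mul_le_mul_of_nonneg_right h2' hc0.le
  have h3 : (D a + 1) * (b - a) ≤ (D a - D t) * (b - a) :=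
    le_trans (by linarith) hDt'
  have h4 : D a + 1 ≤ D a - D t := (mul_le_mul_iff_of_pos_right hba).1 h3
  have := hDnonneg t (mem_Ici.2 ht0)
  linarith

private lemma concave_superadd {D : ℝ → ℝ} (hD : ConcaveOn ℝ (Ici 0) D)
    (hDnonneg : ∀ t ∈ Ici (0:ℝ), 0 ≤ D t) :
    ∀ x, 0 ≤ x → ∀ y, 0 ≤ y → D 0 + D (x + y) ≤ D x + D y := by
  intro x hx y hy
  rcases eq_or_lt_of_le (add_nonneg hx hy) with h0 | hs
  · have hx0 : x = 0 := by linarith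
    have hy0 : y = 0 := by linarith
    simp [hx0, hy0]
  have hs' : (0:ℝ) < x + y := hs
  have hxy : x + y ∈ Ici (0:ℝ) := le_of_lt hs'
  have h1 := hD.2 (mem_Ici.2 le_rfl) hxy (div_nonneg hy hs'.le) (div_nonneg hx hs'.le)
    (by field_simp <;> ring)
  have h2 := hD.2 (mem_Ici.2 le_rfl) hxy (div_nonneg hx hs'.le) (div_nonneg hy hs'.le)
    (by field_simp <;> ring)
  rw [smul_eq_mul, smul_eq_mul, smul_eq_mul, smul_eq_mul] at h1 h2
  have e1 : y / (x + y) * 0 + x / (x + y) * (x + y) = x := by field_simp; ring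
  have e2 : x / (x + y) * 0 + y / (x + y) * (x + y) = y := by field_simp; ring
  rw [e1] at h1
  rw [e2] at h2
  have hkey : y / (x + y) * D 0 + x / (x + y) * D (x + y)
      + (x / (x + y) * D 0 + y / (x + y) * D (x + y)) = D 0 + D (x + y) := by
    field_simp <;> ring
  linarith [add_le_add h1 h2]

noncomputable def maxP {Ω : Type*} (L : Ω → Ω) (ψ : Ω → ℝ) : ℕ → Ω → ℝ
  | 0 => fun _ => 0
  | N + 1 => fun ω => max 0 (ψ ω + maxP L ψ N (L ω))

section MaxP
variable {Ω : Type*} (L : Ω → Ω) (ψ : Ω → ℝ)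

lemma maxP_nonneg : ∀ N ω, 0 ≤ maxP L ψ N ω := by
  intro N ω
  cases N with
  | zero => exact le_refl _
  | succ N => exact le_max_left _ _

lemma maxP_mono : ∀ N ω, maxP L ψ N ω ≤ maxP L ψ (N + 1) ω := by
  intro N
  induction N with
  | zero => intro ω; exact maxP_nonneg L ψ 1 ω
  | succ N ih =>
    intro ω
    exact max_le_max le_rfl (add_le_add le_rfl (ih (L ω)))

lemma birkhoffSum_le_maxP : ∀ N ω, birkhoffSum L ψ N ω ≤ maxP L ψ N ω := by
  intro N
  induction N with
  | zero => intro ω; simp [maxP, birkhoffSum_zero]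
  | succ N ih =>
    intro ω
    rw [birkhoffSum_succ']
    exact le_max_of_le_right (add_le_add le_rfl (ih (L ω)))

lemma maxP_key {N : ℕ} {ω : Ω} (h : 0 < maxP L ψ N ω) :
    maxP L ψ N ω ≤ ψ ω + maxP L ψ N (L ω) := by
  cases N with
  | zero => exact absurd h (lt_irrefl 0)
  | succ N =>
    have : maxP L ψ (N + 1) ω = max 0 (ψ ω + maxP L ψ N (L ω)) := rfl
    rw [this, max_eq_right_iff.2 ?_]
    · exact add_le_add le_rfl (maxP_mono L ψ N (L ω))
    · by_contra hc
      push_neg at hc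
      rw [this, max_eq_left hc.le] at h
      exact absurd h (lt_irrefl 0)

variable {mΩ : MeasurableSpace Ω}

lemma maxP_measurable (hL : Measurable L) (hψ : Measurable ψ) (N : ℕ) :
    Measurable (maxP L ψ N) := by
  induction N with
  | zero => exact measurable_const
  | succ N ih => exact measurable_const.max (hψ.add (ih.comp hL))

lemma maxP_integrable {μ : Measure Ω} [IsProbabilityMeasure μ]
    (hLmp : MeasurePreserving L μ μ) (hψm : Measurable ψ) (hψ : Integrable ψ μ) (N : ℕ) :
    Integrable (maxP L ψ N) μ := by
  induction N with
  | zero => exact integrable_const 0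
  | succ N ih =>
    have h2 : Integrable (fun ω => maxP L ψ N (L ω)) μ :=
      (hLmp.integrable_comp (maxP_measurable L ψ hLmp.measurable hψm N).aestronglyMeasurable).2 ih
    have : Integrable ((fun _ => (0:ℝ)) ⊔ (fun ω => ψ ω + maxP L ψ N (L ω))) μ :=
      (integrable_const (0:ℝ)).sup (hψ.add h2)
    exact this

theorem maximal_ergodic {μ : Measure Ω} [IsProbabilityMeasure μ]
    (hLmp : MeasurePreserving L μ μ) (hψm : Measurable ψ) (hψ : Integrable ψ μ) (N : ℕ) :
    0 ≤ ∫ ω in {ω | 0 < maxP L ψ N ω}, ψ ω ∂μ := by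
  set E := {ω | 0 < maxP L ψ N ω} with hE
  have hEm : MeasurableSet E := measurableSet_lt measurable_const
    (maxP_measurable L ψ hLmp.measurable hψm N)
  have hPint := maxP_integrable L ψ hLmp hψm hψ N
  have hPLint : Integrable (fun ω => maxP L ψ N (L ω)) μ :=
    (hLmp.integrable_comp (maxP_measurable L ψ hLmp.measurable hψm N).aestronglyMeasurable).2 hPint
  -- pointwise on E : maxP N ω - maxP N (L ω) ≤ ψ ω
  have step1 : ∫ ω in E, (maxP L ψ N ω - maxP L ψ N (L ω)) ∂μ ≤ ∫ ω in E, ψ ω ∂μ := by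
    apply setIntegral_mono_on (hPint.sub hPLint).integrableOn hψ.integrableOn hEm
    intro ω hω
    have := maxP_key L ψ hω
    show maxP L ψ N ω - maxP L ψ N (L ω) ≤ ψ ω
    linarith
  have e1 : ∫ ω in E, (maxP L ψ N ω - maxP L ψ N (L ω)) ∂μ
      = ∫ ω in E, maxP L ψ N ω ∂μ - ∫ ω in E, maxP L ψ N (L ω) ∂μ :=
    integral_sub hPint.integrableOn hPLint.integrableOn
  have e2 : ∫ ω in E, maxP L ψ N ω ∂μ = ∫ ω, maxP L ψ N ω ∂μ := by
    rw [← integral_add_compl hEm hPint]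
    have : ∫ ω in Eᶜ, maxP L ψ N ω ∂μ = 0 := by
      apply setIntegral_eq_zero_of_forall_eq_zero
      intro ω hω
      have h1 := maxP_nonneg L ψ N ω
      have h2 : ¬ 0 < maxP L ψ N ω := hω
      linarith
    rw [this, add_zero]
  have e3 : ∫ ω in E, maxP L ψ N (L ω) ∂μ ≤ ∫ ω, maxP L ψ N (L ω) ∂μ :=
    setIntegral_le_integral hPLint
      (Filter.Eventually.of_forall fun ω => maxP_nonneg L ψ N (L ω))
  have e4 : ∫ ω, maxP L ψ N (L ω) ∂μ = ∫ ω, maxP L ψ N ω ∂μ := by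
    rw [← integral_map hLmp.measurable.aemeasurable
      (Measurable.aestronglyMeasurable (maxP_measurable L ψ hLmp.measurable hψm N)),
      hLmp.map_eq]
  calc (0:ℝ) = ∫ ω, maxP L ψ N ω ∂μ - ∫ ω, maxP L ψ N ω ∂μ := by ring
    _ ≤ ∫ ω in E, maxP L ψ N ω ∂μ - ∫ ω in E, maxP L ψ N (L ω) ∂μ := by
        rw [e2]; linarith [e3, e4]
    _ = ∫ ω in E, (maxP L ψ N ω - maxP L ψ N (L ω)) ∂μ := e1.symm
    _ ≤ ∫ ω in E, ψ ω ∂μ := step1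

end MaxP

private lemma concave_sum_bound {D : ℝ → ℝ}
    (hsuper : ∀ x, 0 ≤ x → ∀ y, 0 ≤ y → D 0 + D (x + y) ≤ D x + D y) :
    ∀ (n : ℕ) (a : ℝ), 0 ≤ a → ∀ g : ℕ → ℝ, (∀ k, 0 ≤ g k) →
      D (a + ∑ k ∈ Finset.range n, g k) ≤ D a + ∑ k ∈ Finset.range n, (D (g k) - D 0) := by
  intro n
  induction n with
  | zero => intro a ha g hg; simp
  | succ n ih =>
    intro a ha g hg
    have hS : 0 ≤ ∑ k ∈ Finset.range n, g k := Finset.sum_nonneg fun k _ => hg k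
    have h1 : D ((a + ∑ k ∈ Finset.range n, g k) + g n)
        ≤ D (a + ∑ k ∈ Finset.range n, g k) + (D (g n) - D 0) := by
      have := hsuper (a + ∑ k ∈ Finset.range n, g k) (by linarith) (g n) (hg n)
      linarith
    rw [Finset.sum_range_succ, Finset.sum_range_succ, ← add_assoc]
    have h2 := ih a ha g hg
    linarith

theorem weak_bound {Ω : Type*} [MeasurableSpace Ω] {μ : Measure Ω} [IsProbabilityMeasure μ]
    {L : Ω → Ω} (hLmp : MeasurePreserving L μ μ) {φ : Ω → ℝ} (hφm : Measurable φ)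
    (hφi : Integrable φ μ) (hφ0 : ∀ ω, 0 ≤ φ ω) {ε : ℝ} (hε : 0 < ε) :
    μ {ω | ¬ ∀ n : ℕ, 1 ≤ n → birkhoffSum L φ n ω ≤ ε * n}
      ≤ ENNReal.ofReal ((∫ ω, φ ω ∂μ) / ε) := by
  set ψ : Ω → ℝ := fun ω => φ ω - ε with hψ
  have hψm : Measurable ψ := hφm.sub measurable_const
  have hψi : Integrable ψ μ := hφi.sub (integrable_const ε)
  have hψsum : ∀ n ω, birkhoffSum L ψ n ω = birkhoffSum L φ n ω - n * ε := by
    intro n ω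
    simp [birkhoffSum, hψ, Finset.sum_sub_distrib, mul_comm]
  have hsubset : {ω | ¬ ∀ n : ℕ, 1 ≤ n → birkhoffSum L φ n ω ≤ ε * n}
      ⊆ ⋃ N, {ω | 0 < maxP L ψ N ω} := by
    intro ω hω
    push_neg at hω
    obtain ⟨n, hn1, hn⟩ := hω
    refine mem_iUnion.2 ⟨n, ?_⟩
    have h1 : 0 < birkhoffSum L ψ n ω := by
      rw [hψsum]
      have : ε * n = n * ε := mul_comm _ _
      linarith
    exact lt_of_lt_of_le h1 (birkhoffSum_le_maxP L ψ n ω)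
  refine le_trans (measure_mono hsubset) ?_
  have hmonoN : Monotone (fun N => {ω | 0 < maxP L ψ N ω}) := by
    apply monotone_nat_of_le_succ
    intro N ω hω
    exact lt_of_lt_of_le hω (maxP_mono L ψ N ω)
  rw [hmonoN.directed_le.measure_iUnion]
  refine iSup_le fun N => ?_
  -- maximal ergodic bound
  set E := {ω | 0 < maxP L ψ N ω} with hE
  have hEm : MeasurableSet E := measurableSet_lt measurable_const
    (maxP_measurable L ψ hLmp.measurable hψm N)
  have hmax := maximal_ergodic L ψ hLmp hψm hψi N
  have h1 : ∫ ω in E, ψ ω ∂μ = ∫ ω in E, φ ω ∂μ - ε * (μ E).toReal := by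
    rw [show (fun ω => ψ ω) = fun ω => φ ω - ε from rfl]
    rw [integral_sub hφi.integrableOn (integrableOn_const (measure_ne_top μ E))]
    rw [setIntegral_const, smul_eq_mul, mul_comm]; rfl
  have h2 : ∫ ω in E, φ ω ∂μ ≤ ∫ ω, φ ω ∂μ :=
    setIntegral_le_integral hφi (Eventually.of_forall hφ0)
  have h3 : ε * (μ E).toReal ≤ ∫ ω, φ ω ∂μ := by linarith
  have h4 : (μ E).toReal ≤ (∫ ω, φ ω ∂μ) / ε := (le_div_iff₀' hε).2 h3
  rw [← ENNReal.ofReal_toReal (measure_ne_top μ E)]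
  exact ENNReal.ofReal_le_ofReal h4

theorem strong_law_concave_moments
    {Ω : Type*} [MeasurableSpace Ω] [StandardBorelSpace Ω]
    (μ : Measure Ω) [IsProbabilityMeasure μ]
    (L : Ω → Ω) (hL : Ergodic L μ)
    (f : Ω → ℝ) (hf : Measurable f)
    (D : ℝ → ℝ) (hD : ConcaveOn ℝ (Ici 0) D)
    (hDnonneg : ∀ t ∈ Ici (0:ℝ), 0 ≤ D t)
    (hDslope : Tendsto (fun t => D t / t) atTop (𝓝 0))
    (hint : Integrable (fun ω => D |f ω|) μ) :
    ∀ᵐ ω ∂μ, Tendsto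
      (fun n : ℕ => D |∑ k ∈ Finset.range n, f (L^[k] ω)| / n) atTop (𝓝 0) := by
  have hLmp : MeasurePreserving L μ μ := hL.toMeasurePreserving
  have hmono := concave_mono hD hDnonneg
  have hsuper := concave_superadd hD hDnonneg
  have hD0 : 0 ≤ D 0 := hDnonneg 0 (mem_Ici.2 le_rfl)
  -- measurability of D ∘ |f|
  have hDfm : Measurable (fun ω => D |f ω|) := by
    have hEmono : Monotone (fun t : ℝ => D (max t 0)) := fun s t hst =>
      hmono (mem_Ici.2 (le_max_right _ _)) (mem_Ici.2 (le_max_right _ _))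
        (max_le_max hst le_rfl)
    have h := hEmono.measurable.comp hf.abs
    have : (fun ω => D |f ω|) = (fun t : ℝ => D (max t 0)) ∘ (fun ω => |f ω|) := by
      funext ω; simp [max_eq_left (abs_nonneg (f ω))]
    rw [this]; exact h
  set φ : ℕ → Ω → ℝ := fun M ω => if (M:ℝ) + 1 < |f ω| then D |f ω| - D 0 else 0 with hφ
  have hφm : ∀ M, Measurable (φ M) := fun M =>
    Measurable.ite (measurableSet_lt measurable_const hf.abs)
      (hDfm.sub measurable_const) measurable_const
  have hφ0 : ∀ M ω, 0 ≤ φ M ω := by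
    intro M ω
    simp only [hφ]
    split
    · have : D 0 ≤ D |f ω| := hmono (mem_Ici.2 le_rfl) (mem_Ici.2 (abs_nonneg _)) (abs_nonneg _)
      linarith
    · exact le_refl _
  have hφle : ∀ M ω, φ M ω ≤ D |f ω| := by
    intro M ω
    simp only [hφ]
    split
    · linarith
    · exact hDnonneg _ (mem_Ici.2 (abs_nonneg _))
  have hφi : ∀ M, Integrable (φ M) μ := by
    intro M
    refine hint.mono (hφm M).aestronglyMeasurable (Eventually.of_forall fun ω => ?_)
    rw [Real.norm_eq_abs, Real.norm_eq_abs, abs_of_nonneg (hφ0 M ω),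
      abs_of_nonneg (hDnonneg _ (mem_Ici.2 (abs_nonneg _)))]
    exact hφle M ω
  -- integrals tend to zero
  have hInt0 : Tendsto (fun M => ∫ ω, φ M ω ∂μ) atTop (𝓝 0) := by
    have hptwise : ∀ ω, Tendsto (fun M : ℕ => φ M ω) atTop (𝓝 (0:ℝ)) := by
      intro ω
      obtain ⟨M₀, hM₀⟩ := exists_nat_ge (|f ω|)
      refine tendsto_const_nhds.congr' ?_
      filter_upwards [eventually_ge_atTop M₀] with M hM
      have hnot : ¬ ((M:ℝ) + 1 < |f ω|) := by
        push_neg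
        calc |f ω| ≤ (M₀ : ℝ) := hM₀
          _ ≤ (M : ℝ) := Nat.cast_le.2 hM
          _ ≤ (M : ℝ) + 1 := by linarith
      simp [hφ, hnot]
    have h := tendsto_integral_of_dominated_convergence (f := fun _ : Ω => (0:ℝ))
      (F := φ) (fun ω => D |f ω|)
      (fun M => (hφm M).aestronglyMeasurable) hint
      (fun M => Eventually.of_forall fun ω => by
        rw [Real.norm_eq_abs, abs_of_nonneg (hφ0 M ω)]; exact hφle M ω)
      (Eventually.of_forall hptwise)
    simpa using h
  -- key a.e. statement
  have key : ∀ᵐ ω ∂μ, ∀ j : ℕ, ∃ M : ℕ, ∀ n : ℕ, 1 ≤ n →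
      birkhoffSum L (φ M) n ω ≤ (1/((j:ℝ)+1)) * n := by
    rw [ae_all_iff]
    intro j
    have hεj : 0 < 1/((j:ℝ)+1) := by positivity
    rw [ae_iff]
    have hsub : {ω | ¬ ∃ M : ℕ, ∀ n : ℕ, 1 ≤ n → birkhoffSum L (φ M) n ω ≤ (1/((j:ℝ)+1)) * n}
        ⊆ ⋂ M : ℕ, {ω | ¬ ∀ n : ℕ, 1 ≤ n → birkhoffSum L (φ M) n ω ≤ (1/((j:ℝ)+1)) * n} := by
      intro ω hω
      push_neg at hω
      refine mem_iInter.2 fun M => ?_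
      push_neg
      exact hω M
    refine measure_mono_null hsub ?_
    have hle : ∀ M : ℕ, μ (⋂ M' : ℕ, {ω | ¬ ∀ n : ℕ, 1 ≤ n →
        birkhoffSum L (φ M') n ω ≤ (1/((j:ℝ)+1)) * n})
        ≤ ENNReal.ofReal ((∫ ω, φ M ω ∂μ) / (1/((j:ℝ)+1))) := fun M =>
      le_trans (measure_mono (iInter_subset _ M))
        (weak_bound hLmp (hφm M) (hφi M) (hφ0 M) hεj)
    have hlim : Tendsto (fun M => ENNReal.ofReal ((∫ ω, φ M ω ∂μ) / (1/((j:ℝ)+1))))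
        atTop (𝓝 0) := by
      have : Tendsto (fun M => (∫ ω, φ M ω ∂μ) / (1/((j:ℝ)+1))) atTop (𝓝 0) := by
        simpa using hInt0.div_const (1/((j:ℝ)+1))
      simpa using (ENNReal.tendsto_ofReal this)
    exact le_antisymm (ge_of_tendsto hlim (Eventually.of_forall hle)) (zero_le)
  filter_upwards [key] with ω hω
  rw [Metric.tendsto_atTop]
  intro ε hε
  obtain ⟨j, hj⟩ : ∃ j : ℕ, 1/((j:ℝ)+1) < ε/2 := by
    obtain ⟨j, hj⟩ := exists_nat_gt (2/ε)
    refine ⟨j, ?_⟩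
    have h2 : 2 < (j:ℝ) * ε := (div_lt_iff₀ hε).1 hj
    rw [div_lt_div_iff₀ (by positivity) two_pos]
    nlinarith [h2, hε]
  obtain ⟨M, hM⟩ := hω j
  set c : ℝ := (M:ℝ) + 1 with hc
  have hc0 : 0 < c := by positivity
  -- D(c n)/n → 0
  have hDc : Tendsto (fun n : ℕ => D (c * n) / n) atTop (𝓝 0) := by
    have h1 : Tendsto (fun n : ℕ => c * (n:ℝ)) atTop atTop :=
      Tendsto.const_mul_atTop hc0 tendsto_natCast_atTop_atTop
    have h2 : Tendsto (fun n : ℕ => D (c * n) / (c * n)) atTop (𝓝 0) := hDslope.comp h1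
    have h3 : Tendsto (fun n : ℕ => c * (D (c * n) / (c * n))) atTop (𝓝 0) := by
      simpa using h2.const_mul c
    refine h3.congr' ?_
    filter_upwards [eventually_ge_atTop 1] with n hn
    have hn0 : (0:ℝ) < n := by exact_mod_cast hn
    field_simp
  obtain ⟨N₀, hN₀⟩ := Metric.tendsto_atTop.1 hDc (ε/2) (by positivity)
  refine ⟨max N₀ 1, fun n hn => ?_⟩
  have hn1 : 1 ≤ n := le_trans (le_max_right _ _) hn
  have hnN₀ : N₀ ≤ n := le_trans (le_max_left _ _) hn
  have hn0 : (0:ℝ) < n := by exact_mod_cast hn1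
  set r : Ω → ℝ := fun x => if c < |f x| then |f x| else 0 with hr
  have hr0 : ∀ x, 0 ≤ r x := by
    intro x; simp only [hr]; split
    · exact abs_nonneg _
    · exact le_refl _
  set R := ∑ k ∈ Finset.range n, r (L^[k] ω) with hR
  have hR0 : 0 ≤ R := Finset.sum_nonneg fun k _ => hr0 _
  set S := ∑ k ∈ Finset.range n, f (L^[k] ω) with hS
  have habs : |S| ≤ c * n + R := by
    calc |S| ≤ ∑ k ∈ Finset.range n, |f (L^[k] ω)| := Finset.abs_sum_le_sum_abs _ _
      _ ≤ ∑ k ∈ Finset.range n, (c + r (L^[k] ω)) := by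
          refine Finset.sum_le_sum fun k _ => ?_
          simp only [hr]
          split
          next h => linarith [hc0]
          next h => rw [add_zero]; exact le_of_not_gt h
      _ = c * n + R := by
          rw [Finset.sum_add_distrib, Finset.sum_const, Finset.card_range, hR]
          simp [mul_comm]
  have hcn0 : (0:ℝ) ≤ c * n := by positivity
  have hstep1 : D |S| ≤ D (c * n + R) :=
    hmono (mem_Ici.2 (abs_nonneg _)) (mem_Ici.2 (by linarith)) habs
  have hstep2 : D (c * n + R) ≤ D (c * n) + ∑ k ∈ Finset.range n, (D (r (L^[k] ω)) - D 0) :=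
    concave_sum_bound hsuper n (c * n) hcn0 (fun k => r (L^[k] ω)) (fun k => hr0 _)
  have hstep3 : ∑ k ∈ Finset.range n, (D (r (L^[k] ω)) - D 0) = birkhoffSum L (φ M) n ω := by
    refine Finset.sum_congr rfl fun k _ => ?_
    simp only [hr, hφ, hc]
    split
    · rfl
    · simp
  have hbk : birkhoffSum L (φ M) n ω ≤ (1/((j:ℝ)+1)) * n := hM n hn1
  have hfinal : D |S| / n ≤ D (c * n) / n + 1/((j:ℝ)+1) := by
    rw [hstep3] at hstep2
    have h1 : D |S| ≤ D (c * n) + (1/((j:ℝ)+1)) * n := by linarith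
    calc D |S| / n ≤ (D (c * n) + (1/((j:ℝ)+1)) * n) / n := by gcongr
      _ = D (c * n) / n + 1/((j:ℝ)+1) := by
          field_simp
  have hDS0 : 0 ≤ D |S| := hDnonneg _ (mem_Ici.2 (abs_nonneg _))
  have hDcn : D (c * n) / n < ε/2 := by
    have := hN₀ n hnN₀
    rw [Real.dist_eq, sub_zero] at this
    calc D (c * n) / n ≤ |D (c * n) / n| := le_abs_self _
      _ < ε/2 := this
  rw [Real.dist_eq, sub_zero, abs_of_nonneg (by positivity : (0:ℝ) ≤ D |S| / n)]
  calc D |S| / n ≤ D (c * n) / n + 1/((j:ℝ)+1) := hfinal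
    _ < ε/2 + ε/2 := by linarith
    _ = ε := by ring
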